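/- arXiv:1703.07857 — 6 statements merged into one kernel-verified Lean document; each statement's English description precedes it below -/
import Mathlib

section
/- Assume that 1 is an eigenvalue of a matrix S ∈ Sp(ℝ⁴) and that there exists a splitting of ℝ⁴ by S-invariant Lagrangian planes, i.e., two Lagrangian planes V and W with V ⊕ W = ℝ⁴, S(V) = V and S(W) = W. Then either S = I or dim ker(S − I) = 2. -/
open Matrix

/-- Index type for 4×4 matrices, split into two 2×2 blocks. -/
abbrev K4 := Fin 2 ⊕ Fin 2

/-- The standard symplectic matrix J = [[0, I₂], [−I₂, 0]]. -/
noncomputable def J4 : Matrix K4 K4 ℝ := Matrix.fromBlocks 0 1 (-1) 0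

/-- S belongs to the symplectic group Sp(ℝ⁴). -/
def IsSymplectic (S : Matrix K4 K4 ℝ) : Prop := Sᵀ * J4 * S = J4

/-- A Lagrangian plane: a two-dimensional subspace of ℝ⁴ on which the
symplectic form ω(ξ, η) = ξᵀ J η vanishes identically. -/
def IsLagrangian (V : Submodule ℝ (K4 → ℝ)) : Prop :=
  Module.finrank ℝ ↥V = 2 ∧ ∀ ξ ∈ V, ∀ η ∈ V, ξ ⬝ᵥ J4.mulVec η = 0

lemma J4J4 : J4 * J4 = -1 := by
  simp [J4, Matrix.fromBlocks_multiply, ← Matrix.fromBlocks_one, Matrix.fromBlocks_neg]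

lemma J4inj : Function.Injective J4.mulVec := by
  intro x y hxy
  have := congrArg (J4.mulVec) hxy
  rwa [Matrix.mulVec_mulVec, Matrix.mulVec_mulVec, J4J4, Matrix.neg_mulVec, Matrix.neg_mulVec,
    Matrix.one_mulVec, Matrix.one_mulVec, neg_inj] at this

lemma omega_symp {S : Matrix K4 K4 ℝ} (hS : IsSymplectic S) (x y : K4 → ℝ) :
    (S *ᵥ x) ⬝ᵥ J4.mulVec (S *ᵥ y) = x ⬝ᵥ J4.mulVec y := by
  have : (S *ᵥ x) ⬝ᵥ J4 *ᵥ (S *ᵥ y) = x ⬝ᵥ (Sᵀ * J4 * S) *ᵥ y := by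
    rw [Matrix.mulVec_mulVec, Matrix.dotProduct_mulVec, Matrix.dotProduct_mulVec,
      ← Matrix.vecMul_transpose, Matrix.vecMul_vecMul, Matrix.mul_assoc]
  rw [this, hS]

/-- The symplectic pairing, as a linear map from `W` to the dual of `V`. -/
noncomputable def Phi (V W : Submodule ℝ (K4 → ℝ)) : W →ₗ[ℝ] Module.Dual ℝ V where
  toFun w :=
    { toFun := fun v => (v : K4 → ℝ) ⬝ᵥ J4.mulVec (w : K4 → ℝ)
      map_add' := fun a b => by simp [add_dotProduct]
      map_smul' := fun c a => by simp [smul_dotProduct] }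
  map_add' a b := by ext v; simp [Matrix.mulVec_add, dotProduct_add]
  map_smul' c a := by ext v; simp [Matrix.mulVec_smul, dotProduct_smul]

theorem stmt1 (S : Matrix K4 K4 ℝ) (hS : IsSymplectic S)
    (h1 : Module.End.HasEigenvalue S.mulVecLin 1)
    (V W : Submodule ℝ (K4 → ℝ))
    (hV : IsLagrangian V) (hW : IsLagrangian W)
    (hsplit : IsCompl V W)
    (hSV : V.map S.mulVecLin = V) (hSW : W.map S.mulVecLin = W) :
    S = 1 ∨ Module.finrank ℝ ↥(LinearMap.ker (S - 1).mulVecLin) = 2 := by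
  classical
  set f := S.mulVecLin with hf
  set e := (S - 1).mulVecLin with he
  have hef : ∀ x, e x = f x - x := by
    intro x
    simp [he, hf, Matrix.mulVecLin_apply, Matrix.sub_mulVec, Matrix.one_mulVec]
  set K := LinearMap.ker e with hK
  -- K ≠ ⊥
  have hKne : K ≠ ⊥ := by
    obtain ⟨x, hx⟩ := h1.exists_hasEigenvector
    have hxK : x ∈ K := by
      rw [hK, LinearMap.mem_ker, hef]
      have := hx.apply_eq_smul
      rw [this, one_smul, sub_self]
    intro hbot
    exact hx.right (by simpa [hbot] using hxK)
  -- invariance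
  have hfV : ∀ x : K4 → ℝ, x ∈ V → f x ∈ V := fun x hx => hSV ▸ Submodule.mem_map_of_mem hx
  have hfW : ∀ x : K4 → ℝ, x ∈ W → f x ∈ W := fun x hx => hSW ▸ Submodule.mem_map_of_mem hx
  have heV : ∀ x : K4 → ℝ, x ∈ V → e x ∈ V := fun x hx => by
    rw [hef]; exact V.sub_mem (hfV x hx) hx
  have heW : ∀ x : K4 → ℝ, x ∈ W → e x ∈ W := fun x hx => by
    rw [hef]; exact W.sub_mem (hfW x hx) hx
  set EV := e.restrict heV with hEV
  set EW := e.restrict heW with hEW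
  set FW := f.restrict hfW with hFW
  -- FW surjective
  have hFWsurj : Function.Surjective FW := by
    rintro ⟨w, hw⟩
    rw [← hSW] at hw
    obtain ⟨x, hxW, hfx⟩ := hw
    exact ⟨⟨x, hxW⟩, Subtype.ext hfx⟩
  -- Phi injective
  have hPhiInj : Function.Injective (Phi V W) := by
    rw [injective_iff_map_eq_zero]
    intro w hw
    have hall : ∀ x : K4 → ℝ, x ⬝ᵥ J4 *ᵥ (w : K4 → ℝ) = 0 := by
      intro x
      have hx : x ∈ V ⊔ W := by rw [hsplit.sup_eq_top]; trivial
      obtain ⟨v, hv, w', hw', rfl⟩ := Submodule.mem_sup.mp hx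
      rw [add_dotProduct]
      have e1 : v ⬝ᵥ J4 *ᵥ (w : K4 → ℝ) = 0 := by
        have := congrArg (fun φ => φ ⟨v, hv⟩) hw
        simpa [Phi] using this
      have e2 : w' ⬝ᵥ J4 *ᵥ (w : K4 → ℝ) = 0 := hW.2 w' hw' _ w.2
      rw [e1, e2, add_zero]
    have hz : J4 *ᵥ (w : K4 → ℝ) = 0 :=
      dotProduct_self_eq_zero.mp (hall _)
    have : (w : K4 → ℝ) = 0 := J4inj (by rw [hz, Matrix.mulVec_zero])
    exact Subtype.ext this
  have hdual : Module.finrank ℝ (Module.Dual ℝ ↥V) = 2 := by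
    rw [Subspace.dual_finrank_eq]; exact hV.1
  have hPhiSurj : Function.Surjective (Phi V W) :=
    (LinearMap.injective_iff_surjective_of_finrank_eq_finrank
      (by rw [hW.1, hdual])).mp hPhiInj
  -- key identity
  have hkey : (Phi V W).comp EW = -((EV.dualMap).comp ((Phi V W).comp FW)) := by
    apply LinearMap.ext; intro w
    apply LinearMap.ext; intro v
    have hsymp := omega_symp hS (v : K4 → ℝ) (w : K4 → ℝ)
    simp only [LinearMap.comp_apply, LinearMap.neg_apply, LinearMap.dualMap_apply]
    show (v : K4 → ℝ) ⬝ᵥ J4 *ᵥ ((EW w : K4 → ℝ)) =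
      -((EV v : K4 → ℝ) ⬝ᵥ J4 *ᵥ ((FW w : K4 → ℝ)))
    have h1 : (EW w : K4 → ℝ) = f (w : K4 → ℝ) - (w : K4 → ℝ) := by
      rw [hEW, LinearMap.restrict_apply]; exact hef _
    have h2 : (EV v : K4 → ℝ) = f (v : K4 → ℝ) - (v : K4 → ℝ) := by
      rw [hEV, LinearMap.restrict_apply]; exact hef _
    have h3 : (FW w : K4 → ℝ) = f (w : K4 → ℝ) := by
      rw [hFW, LinearMap.restrict_apply]
    rw [h1, h2, h3]
    simp only [hf, Matrix.mulVecLin_apply] at hsymp ⊢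
    rw [Matrix.mulVec_sub, dotProduct_sub, sub_dotProduct, hsymp]
    ring
  -- ranks
  have hrank : Module.finrank ℝ ↥(LinearMap.range EW) = Module.finrank ℝ ↥(LinearMap.range EV) := by
    have c1 : Module.finrank ℝ ↥(LinearMap.range ((Phi V W).comp EW))
        = Module.finrank ℝ ↥(LinearMap.range EW) := by
      rw [LinearMap.range_comp]
      exact (Submodule.equivMapOfInjective _ hPhiInj _).finrank_eq.symm
    have c2 : LinearMap.range ((EV.dualMap).comp ((Phi V W).comp FW))
        = LinearMap.range EV.dualMap := by
      apply LinearMap.range_comp_of_range_eq_top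
      rw [LinearMap.range_eq_top]
      exact hPhiSurj.comp hFWsurj
    have c3 : Module.finrank ℝ ↥(LinearMap.range EV.dualMap)
        = Module.finrank ℝ ↥(LinearMap.range EV) :=
      LinearMap.finrank_range_dualMap_eq_finrank_range EV
    calc Module.finrank ℝ ↥(LinearMap.range EW)
        = Module.finrank ℝ ↥(LinearMap.range ((Phi V W).comp EW)) := c1.symm
      _ = Module.finrank ℝ ↥(LinearMap.range (-((EV.dualMap).comp ((Phi V W).comp FW)))) := by
          rw [hkey]
      _ = Module.finrank ℝ ↥(LinearMap.range EV.dualMap) := by rw [LinearMap.range_neg, c2]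
      _ = Module.finrank ℝ ↥(LinearMap.range EV) := c3
  -- nullities
  have hnullV := LinearMap.finrank_range_add_finrank_ker EV
  have hnullW := LinearMap.finrank_range_add_finrank_ker EW
  rw [hV.1] at hnullV
  rw [hW.1] at hnullW
  have hnull : Module.finrank ℝ ↥(LinearMap.ker EW) = Module.finrank ℝ ↥(LinearMap.ker EV) := by
    omega
  -- kernels of restrictions vs intersections
  have hmapV : Module.finrank ℝ ↥(LinearMap.ker EV) = Module.finrank ℝ ↥(K ⊓ V) := by
    rw [hEV, LinearMap.ker_restrict heV, ← hK]
    have h := Submodule.map_comap_subtype V K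
    calc Module.finrank ℝ ↥(K.comap V.subtype)
        = Module.finrank ℝ ↥(Submodule.map V.subtype (K.comap V.subtype)) :=
          (Submodule.equivMapOfInjective _ (Submodule.injective_subtype V) _).finrank_eq
      _ = Module.finrank ℝ ↥(K ⊓ V) := by rw [h, inf_comm]
  have hmapW : Module.finrank ℝ ↥(LinearMap.ker EW) = Module.finrank ℝ ↥(K ⊓ W) := by
    rw [hEW, LinearMap.ker_restrict heW, ← hK]
    have h := Submodule.map_comap_subtype W K
    calc Module.finrank ℝ ↥(K.comap W.subtype)
        = Module.finrank ℝ ↥(Submodule.map W.subtype (K.comap W.subtype)) :=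
          (Submodule.equivMapOfInjective _ (Submodule.injective_subtype W) _).finrank_eq
      _ = Module.finrank ℝ ↥(K ⊓ W) := by rw [h, inf_comm]
  -- decomposition of the kernel
  have hKdecomp : K = (K ⊓ V) ⊔ (K ⊓ W) := by
    apply le_antisymm
    · intro x hx
      have hx' : x ∈ V ⊔ W := by rw [hsplit.sup_eq_top]; trivial
      obtain ⟨v, hv, w, hw', rfl⟩ := Submodule.mem_sup.mp hx'
      have hsum : e v + e w = 0 := by rw [← map_add]; exact hx
      have hevV : e v ∈ V := heV _ hv
      have hewW : e w ∈ W := heW _ hw'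
      have hmem : e v ∈ V ⊓ W := by
        refine ⟨hevV, ?_⟩
        have : e v = -(e w) := eq_neg_of_add_eq_zero_left hsum
        rw [this]; exact W.neg_mem hewW
      rw [hsplit.disjoint.eq_bot] at hmem
      have hev0 : e v = 0 := hmem
      have hew0 : e w = 0 := by
        have := hsum; rw [hev0, zero_add] at this; exact this
      exact Submodule.mem_sup.mpr ⟨v, ⟨hev0, hv⟩, w, ⟨hew0, hw'⟩, rfl⟩
    · exact sup_le inf_le_left inf_le_left
  have hdisjKVW : Disjoint (K ⊓ V) (K ⊓ W) :=
    hsplit.disjoint.mono inf_le_right inf_le_right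
  have hKadd : Module.finrank ℝ ↥K
      = Module.finrank ℝ ↥(K ⊓ V) + Module.finrank ℝ ↥(K ⊓ W) := by
    have h := Submodule.finrank_sup_add_finrank_inf_eq (K ⊓ V) (K ⊓ W)
    rw [hdisjKVW.eq_bot, finrank_bot, add_zero, ← hKdecomp] at h
    exact h
  -- combine
  set d := Module.finrank ℝ ↥(K ⊓ V) with hd
  have hWd : Module.finrank ℝ ↥(K ⊓ W) = d := by rw [← hmapW, hnull, hmapV]
  have hKd : Module.finrank ℝ ↥K = d + d := by rw [hKadd, hWd]
  have hdle : d ≤ 2 := by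
    have := Submodule.finrank_mono (inf_le_right : K ⊓ V ≤ V)
    rwa [hV.1] at this
  have hdpos : 0 < d := by
    rcases Nat.eq_zero_or_pos d with h0 | h
    · exfalso
      apply hKne
      rw [← Submodule.finrank_eq_zero (R := ℝ) (M := K4 → ℝ)]
      omega
    · exact h
  interval_cases d
  · -- d = 1 : finrank K = 2
    right
    omega
  · -- d = 2 : S = 1
    left
    have hVK : V ≤ K := by
      have : K ⊓ V = V := Submodule.eq_of_le_of_finrank_le inf_le_right (by rw [hV.1, ← hd])
      rw [← this]; exact inf_le_left
    have hWK : W ≤ K := by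
      have : K ⊓ W = W := Submodule.eq_of_le_of_finrank_le inf_le_right (by rw [hW.1, hWd])
      rw [← this]; exact inf_le_left
    have hKtop : K = ⊤ := by
      rw [← top_le_iff, ← hsplit.sup_eq_top]
      exact sup_le hVK hWK
    have hezero : e = 0 := LinearMap.ker_eq_top.mp hKtop
    have hmv : ∀ v, (S - 1) *ᵥ v = 0 := by
      intro v
      have := congrFun (congrArg DFunLike.coe hezero) v
      simpa [he, Matrix.mulVecLin_apply, Matrix.sub_mulVec] using this
    have : S - 1 = 0 := by
      ext i j
      have := congrFun (hmv (Pi.single j 1)) i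
      simpa [Matrix.mulVec_single] using this
    exact sub_eq_zero.mp this
end

section
/- For ε ≠ 0 define the real 4×4 matrices Q_ε = [[A_ε, M], [0, A_ε⁻¹]] and B_ε = [[C_εᵀ, 0], [0, C_ε⁻¹]], where A_ε = diag(1, ε), M = diag(0, 1), and C_ε = [[1, ε], [−ε, 1]], and set S_ε = Q_ε B_ε Q_ε⁻¹. Also let P = [[βᵀ, 0], [0, β⁻¹]] with β = [[1, 0], [−1, 1]]. Then: (i) S_ε ∈ Sp(ℝ⁴); (ii) the spectrum of S_ε equals {1 + iε, 1 − iε, (1 + iε)⁻¹, (1 − iε)⁻¹}, so S_ε is not elliptic; (iii) det(S_ε − I) > 0 and tr S_ε < 4; (iv) S_ε → P as ε → 0; and (v) P ∈ Sp(ℝ⁴), P ≠ I, σ(P) = {1}, and dim ker(P − I) = 2. In particular, the equivalence between ellipticity and the conditions det(S − I) > 0, tr S < 4 fails in every neighborhood of P. -/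
open Matrix

/-- S is elliptic: every complex eigenvalue μ satisfies |μ| = 1 and μ ≠ ±1. -/
def IsElliptic (S : Matrix K4 K4 ℝ) : Prop :=
  ∀ μ ∈ spectrum ℂ (S.map Complex.ofReal), ‖μ‖ = 1 ∧ μ ≠ 1 ∧ μ ≠ -1

/-- A_ε = diag(1, ε). -/
noncomputable def Aeps (ε : ℝ) : Matrix (Fin 2) (Fin 2) ℝ := !![1, 0; 0, ε]

/-- M = diag(0, 1). -/
noncomputable def Mblk : Matrix (Fin 2) (Fin 2) ℝ := !![0, 0; 0, 1]

/-- C_ε = [[1, ε], [−ε, 1]]. -/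
noncomputable def Ceps (ε : ℝ) : Matrix (Fin 2) (Fin 2) ℝ := !![1, ε; -ε, 1]

/-- Q_ε = [[A_ε, M], [0, A_ε⁻¹]]. -/
noncomputable def Qeps (ε : ℝ) : Matrix K4 K4 ℝ :=
  Matrix.fromBlocks (Aeps ε) Mblk 0 (Aeps ε)⁻¹

/-- B_ε = [[C_εᵀ, 0], [0, C_ε⁻¹]]. -/
noncomputable def Beps (ε : ℝ) : Matrix K4 K4 ℝ :=
  Matrix.fromBlocks (Ceps ε)ᵀ 0 0 (Ceps ε)⁻¹

/-- S_ε = Q_ε B_ε Q_ε⁻¹. -/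
noncomputable def Seps (ε : ℝ) : Matrix K4 K4 ℝ := Qeps ε * Beps ε * (Qeps ε)⁻¹

/-- β = [[1, 0], [−1, 1]]. -/
noncomputable def bmat : Matrix (Fin 2) (Fin 2) ℝ := !![1, 0; -1, 1]

/-- P = [[βᵀ, 0], [0, β⁻¹]]. -/
noncomputable def Pmat : Matrix K4 K4 ℝ := Matrix.fromBlocks bmatᵀ 0 0 bmat⁻¹

lemma d_pos (ε : ℝ) : (0:ℝ) < 1 + ε^2 := by positivity
lemma d_ne (ε : ℝ) : (1 + ε^2 : ℝ) ≠ 0 := (d_pos ε).ne'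

lemma Aeps_inv {ε : ℝ} (hε : ε ≠ 0) : (Aeps ε)⁻¹ = !![1, 0; 0, ε⁻¹] := by
  apply inv_eq_right_inv
  ext i j
  fin_cases i <;> fin_cases j <;>
    simp [Aeps, Matrix.mul_apply, Fin.sum_univ_two, Matrix.one_apply, hε]

lemma Ceps_inv (ε : ℝ) :
    (Ceps ε)⁻¹ = !![1/(1+ε^2), -ε/(1+ε^2); ε/(1+ε^2), 1/(1+ε^2)] := by
  apply inv_eq_right_inv
  have hd := d_ne ε
  ext i j
  fin_cases i <;> fin_cases j
  all_goals
    · simp [Ceps, Matrix.mul_apply, Fin.sum_univ_two, Matrix.one_apply]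
      try first | (field_simp; ring) | field_simp | ring
  all_goals try first | tauto | (field_simp; ring)

lemma bmat_inv : bmat⁻¹ = !![1, 0; 1, 1] := by
  apply inv_eq_right_inv
  ext i j
  fin_cases i <;> fin_cases j <;>
    simp [bmat, Matrix.mul_apply, Fin.sum_univ_two, Matrix.one_apply]

noncomputable def Sexp (ε : ℝ) : Matrix K4 K4 ℝ :=
  Matrix.fromBlocks !![1, -1; ε^2, 1] !![0, ε; ε/(1+ε^2), -ε^3/(1+ε^2)] 0
    !![1/(1+ε^2), -ε^2/(1+ε^2); 1/(1+ε^2), 1/(1+ε^2)]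

lemma Qeps_mul_inv {ε : ℝ} (hε : ε ≠ 0) :
    Qeps ε * Matrix.fromBlocks !![1, 0; 0, ε⁻¹] (-Mblk) 0 (Aeps ε) = 1 := by
  rw [Qeps, Aeps_inv hε, Matrix.fromBlocks_multiply, ← Matrix.fromBlocks_one]
  congr 1 <;>
    · ext i j
      fin_cases i <;> fin_cases j <;>
        · simp [Aeps, Mblk, Matrix.mul_apply, Fin.sum_univ_two, Matrix.one_apply]
          try first | (field_simp; ring) | field_simp | ring

lemma Qeps_inv {ε : ℝ} (hε : ε ≠ 0) :
    (Qeps ε)⁻¹ = Matrix.fromBlocks !![1, 0; 0, ε⁻¹] (-Mblk) 0 (Aeps ε) :=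
  inv_eq_right_inv (Qeps_mul_inv hε)

lemma Ceps_tr (ε : ℝ) : (Ceps ε)ᵀ = !![1, -ε; ε, 1] := by
  ext i j; fin_cases i <;> fin_cases j <;> simp [Ceps]

lemma Seps_eq {ε : ℝ} (hε : ε ≠ 0) : Seps ε = Sexp ε := by
  have hd := d_ne ε
  rw [Seps, Qeps_inv hε, Qeps, Beps, Ceps_tr, Aeps_inv hε, Ceps_inv,
    Matrix.fromBlocks_multiply, Matrix.fromBlocks_multiply, Sexp]
  ext i j
  fin_cases i <;> fin_cases j <;>
    try simp [Aeps, Mblk, Ceps, Matrix.mul_apply, Fin.sum_univ_two]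
  all_goals try first | tauto | (field_simp; ring) | field_simp | ring
  all_goals exact Or.inl trivial

lemma Sexp_symp {ε : ℝ} (hε : ε ≠ 0) : IsSymplectic (Sexp ε) := by
  have hd := d_ne ε
  unfold IsSymplectic J4 Sexp
  ext i j
  fin_cases i <;> fin_cases j <;>
    try simp [Matrix.mul_apply, Fintype.sum_sum_type, Fin.sum_univ_two,
      Matrix.transpose_apply]
  all_goals try first | tauto | (field_simp; ring) | field_simp | ring
  all_goals exact Or.inl trivial

open Complex in
lemma det_fb (μ : ℂ) (X Y W : Matrix (Fin 2) (Fin 2) ℂ) :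
    (μ • (1 : Matrix K4 K4 ℂ) - Matrix.fromBlocks X Y 0 W).det =
      (μ • 1 - X).det * (μ • 1 - W).det := by
  have h : μ • (1 : Matrix K4 K4 ℂ) - Matrix.fromBlocks X Y 0 W =
      Matrix.fromBlocks (μ • 1 - X) (-Y) 0 (μ • 1 - W) := by
    rw [← Matrix.fromBlocks_one, Matrix.fromBlocks_smul]
    ext i j
    rcases i with i | i <;> rcases j with j | j <;> simp
  rw [h, Matrix.det_fromBlocks_zero₂₁]

open Complex in
lemma Sexp_map (ε : ℝ) : (Sexp ε).map Complex.ofReal =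
    Matrix.fromBlocks !![1, -1; (ε:ℂ)^2, 1]
      !![0, (ε:ℂ); (ε:ℂ)/(1+(ε:ℂ)^2), -(ε:ℂ)^3/(1+(ε:ℂ)^2)] 0
      !![1/(1+(ε:ℂ)^2), -(ε:ℂ)^2/(1+(ε:ℂ)^2); 1/(1+(ε:ℂ)^2), 1/(1+(ε:ℂ)^2)] := by
  rw [Sexp, Matrix.fromBlocks_map]
  congr 1 <;> try congr 1
  all_goals
    ext i j
    fin_cases i <;> fin_cases j <;> simp [Matrix.map_apply] <;> push_cast <;> ring

open Complex in
lemma spec_Seps {ε : ℝ} (hε : ε ≠ 0) :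
    spectrum ℂ ((Seps ε).map Complex.ofReal) =
      {1 + (ε : ℂ) * Complex.I, 1 - (ε : ℂ) * Complex.I,
        (1 + (ε : ℂ) * Complex.I)⁻¹, (1 - (ε : ℂ) * Complex.I)⁻¹} := by
  have hdc : ((1:ℂ) + (ε:ℂ)^2) ≠ 0 := by
    have : ((1 + ε^2 : ℝ) : ℂ) ≠ 0 := by exact_mod_cast d_ne ε
    simpa [push_cast] using this
  have hfac : ((1:ℂ) + (ε:ℂ)*I) * (1 - (ε:ℂ)*I) = 1 + (ε:ℂ)^2 := by
    linear_combination (-(ε:ℂ)^2) * Complex.I_sq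
  have h1 : (1:ℂ) + (ε:ℂ)*I ≠ 0 := by
    intro h; rw [h, zero_mul] at hfac; exact hdc hfac.symm
  have h2 : (1:ℂ) - (ε:ℂ)*I ≠ 0 := by
    intro h; rw [h, mul_zero] at hfac; exact hdc hfac.symm
  have e1 : ((1:ℂ) + (ε:ℂ)*I)⁻¹ = (1 - (ε:ℂ)*I)/(1+(ε:ℂ)^2) := by
    rw [eq_div_iff hdc, ← hfac]; field_simp; try ring
  have e2 : ((1:ℂ) - (ε:ℂ)*I)⁻¹ = (1 + (ε:ℂ)*I)/(1+(ε:ℂ)^2) := by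
    rw [eq_div_iff hdc, ← hfac]; field_simp; try ring
  ext μ
  rw [spectrum.mem_iff, Matrix.isUnit_iff_isUnit_det, isUnit_iff_ne_zero, not_not,
    Algebra.algebraMap_eq_smul_one, Seps_eq hε, Sexp_map, det_fb]
  have hdet : (μ • (1 : Matrix (Fin 2) (Fin 2) ℂ) - !![1, -1; (ε:ℂ)^2, 1]).det *
      (μ • (1 : Matrix (Fin 2) (Fin 2) ℂ) -
        !![1/(1+(ε:ℂ)^2), -(ε:ℂ)^2/(1+(ε:ℂ)^2); 1/(1+(ε:ℂ)^2), 1/(1+(ε:ℂ)^2)]).det =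
      (μ - (1 + (ε:ℂ)*I)) * (μ - (1 - (ε:ℂ)*I)) *
        ((μ - (1 + (ε:ℂ)*I)⁻¹) * (μ - (1 - (ε:ℂ)*I)⁻¹)) := by
    rw [e1, e2]
    simp only [Matrix.det_fin_two, Matrix.sub_apply, Matrix.smul_apply, Matrix.one_apply,
      Matrix.cons_val', Matrix.cons_val_zero, Matrix.cons_val_one, Matrix.head_cons,
      Matrix.empty_val', Matrix.cons_val_fin_one, Matrix.head_fin_const]
    simp
    field_simp
    ring_nf
    linear_combination (2*μ^2*(ε:ℂ)^2 + μ^2*(ε:ℂ)^6 + 2*μ^2*(ε:ℂ)^4 - 4*μ*(ε:ℂ)^2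
      - 2*μ*(ε:ℂ)^4 + 2*(ε:ℂ)^2 + (ε:ℂ)^4 - (ε:ℂ)^4*Complex.I^2) * Complex.I_sq
  rw [hdet]
  simp only [Set.mem_insert_iff, Set.mem_singleton_iff, mul_eq_zero, sub_eq_zero]
  tauto

lemma not_elliptic {ε : ℝ} (hε : ε ≠ 0) : ¬ IsElliptic (Seps ε) := by
  intro h
  have hmem : (1 + (ε:ℂ) * Complex.I) ∈ spectrum ℂ ((Seps ε).map Complex.ofReal) := by
    rw [spec_Seps hε]; left; rfl
  have habs := (h _ hmem).1
  have : Complex.normSq (1 + (ε:ℂ) * Complex.I) = 1 := by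
    rw [← Complex.sq_norm, habs]; norm_num
  rw [Complex.normSq_apply] at this
  simp [Complex.add_re, Complex.add_im, Complex.mul_re, Complex.mul_im] at this
  exact hε this

lemma det_pos {ε : ℝ} (hε : ε ≠ 0) : 0 < (Seps ε - 1).det := by
  have hd := d_ne ε
  have h1 : Seps ε - 1 = Matrix.fromBlocks !![0, -1; ε^2, 0]
      !![0, ε; ε/(1+ε^2), -ε^3/(1+ε^2)] 0
      !![1/(1+ε^2) - 1, -ε^2/(1+ε^2); 1/(1+ε^2), 1/(1+ε^2) - 1] := by
    rw [Seps_eq hε, Sexp, ← Matrix.fromBlocks_one]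
    ext i j
    rcases i with i | i <;> rcases j with j | j <;> fin_cases i <;> fin_cases j <;>
      simp [Matrix.one_apply]
  rw [h1, Matrix.det_fromBlocks_zero₂₁]
  have e1 : (!![0, -1; ε^2, 0] : Matrix (Fin 2) (Fin 2) ℝ).det = ε^2 := by
    simp [Matrix.det_fin_two]
  have e2 : (!![1/(1+ε^2) - 1, -ε^2/(1+ε^2); 1/(1+ε^2), 1/(1+ε^2) - 1] :
      Matrix (Fin 2) (Fin 2) ℝ).det = ε^2/(1+ε^2) := by
    simp [Matrix.det_fin_two]
    field_simp
    ring
  rw [e1, e2]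
  have := d_pos ε
  positivity

lemma trace_lt {ε : ℝ} (hε : ε ≠ 0) : (Seps ε).trace < 4 := by
  have hd := d_pos ε
  rw [Seps_eq hε, Sexp]
  simp [Matrix.trace, Fintype.sum_sum_type, Fin.sum_univ_two, Matrix.diag]
  have h2 : (1+ε^2)⁻¹ < 1 := by
    rw [inv_lt_one_iff₀]
    right
    nlinarith [sq_pos_of_ne_zero hε]
  linarith

lemma bmat_tr : bmatᵀ = !![1, -1; 0, 1] := by
  ext i j; fin_cases i <;> fin_cases j <;> simp [bmat]

lemma Sexp_zero : Sexp 0 = Pmat := by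
  rw [Sexp, Pmat, bmat_inv, bmat_tr]
  ext i j
  rcases i with i | i <;> rcases j with j | j <;> fin_cases i <;> fin_cases j <;>
    simp [bmat] <;> norm_num

lemma Sexp_cont : Continuous Sexp := by
  apply continuous_matrix
  intro i j
  rcases i with i | i <;> rcases j with j | j <;> fin_cases i <;> fin_cases j <;>
    · simp only [Sexp, Matrix.fromBlocks_apply₁₁, Matrix.fromBlocks_apply₁₂,
        Matrix.fromBlocks_apply₂₁, Matrix.fromBlocks_apply₂₂, Matrix.zero_apply]
      norm_num [Matrix.cons_val_zero, Matrix.cons_val_one, Matrix.head_cons]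
      try fun_prop (disch := intro x; positivity)

lemma tendsto_Seps : Filter.Tendsto Seps (nhdsWithin 0 {0}ᶜ) (nhds Pmat) := by
  have h1 : Filter.Tendsto Sexp (nhdsWithin 0 {0}ᶜ) (nhds Pmat) := by
    rw [← Sexp_zero]
    exact (Sexp_cont.tendsto 0).mono_left nhdsWithin_le_nhds
  apply h1.congr'
  filter_upwards [self_mem_nhdsWithin] with ε (hε : ε ∈ ({0}ᶜ : Set ℝ))
  exact (Seps_eq hε).symm

lemma Pmat_symp : IsSymplectic Pmat := by
  unfold IsSymplectic J4 Pmat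
  rw [bmat_inv, bmat_tr]
  ext i j
  fin_cases i <;> fin_cases j <;>
    simp [Matrix.mul_apply, Fintype.sum_sum_type, Fin.sum_univ_two]

lemma Pmat_ne_one : Pmat ≠ 1 := by
  intro h
  have := congrFun (congrFun h (Sum.inl 0)) (Sum.inl 1)
  rw [Pmat, bmat_tr] at this
  simp [Matrix.one_apply] at this

lemma Pmat_map : Pmat.map Complex.ofReal =
    Matrix.fromBlocks !![1, -1; 0, 1] 0 0 !![1, 0; 1, 1] := by
  rw [Pmat, bmat_inv, bmat_tr, Matrix.fromBlocks_map]
  congr 1 <;> try congr 1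
  all_goals
    ext i j
    fin_cases i <;> fin_cases j <;> simp [Matrix.map_apply]

lemma Pmat_spec : spectrum ℂ (Pmat.map Complex.ofReal) = {1} := by
  ext μ
  rw [spectrum.mem_iff, Matrix.isUnit_iff_isUnit_det, isUnit_iff_ne_zero, not_not,
    Algebra.algebraMap_eq_smul_one, Pmat_map, det_fb]
  have h : (μ • (1 : Matrix (Fin 2) (Fin 2) ℂ) - !![1, -1; 0, 1]).det *
      (μ • (1 : Matrix (Fin 2) (Fin 2) ℂ) - !![1, 0; 1, 1]).det = (μ - 1)^4 := by
    simp [Matrix.det_fin_two, Matrix.one_apply]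
    ring
  rw [h, Set.mem_singleton_iff, pow_eq_zero_iff (by norm_num), sub_eq_zero]

lemma aux_rank (f : (K4 → ℝ) →ₗ[ℝ] ℝ × ℝ) (hf : Function.Surjective f) :
    Module.finrank ℝ ↥(LinearMap.ker f) = 2 := by
  have hrn := LinearMap.finrank_range_add_finrank_ker f
  rw [LinearMap.range_eq_top.mpr hf] at hrn
  simp only [finrank_top] at hrn
  have h1 : Module.finrank ℝ (K4 → ℝ) = 4 := by simp [Module.finrank_pi]
  have h2 : Module.finrank ℝ (ℝ × ℝ) = 2 := by simp
  rw [h1, h2] at hrn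
  omega

lemma Pmat_ker : Module.finrank ℝ ↥(LinearMap.ker (Pmat - 1).mulVecLin) = 2 := by
  have hker : LinearMap.ker (Pmat - 1).mulVecLin =
      LinearMap.ker ((LinearMap.proj (Sum.inl 1 : K4)).prod
        (LinearMap.proj (Sum.inr 0 : K4)) : (K4 → ℝ) →ₗ[ℝ] ℝ × ℝ) := by
    ext x
    simp only [LinearMap.mem_ker, Matrix.mulVecLin_apply, LinearMap.prod_apply,
      LinearMap.proj_apply, Pmat, bmat_inv, bmat_tr, Prod.mk_eq_zero, Function.prod]
    constructor
    · intro h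
      constructor
      · have := congrFun h (Sum.inl 0)
        simpa [Matrix.mulVec, dotProduct, Fintype.sum_sum_type, Fin.sum_univ_two,
          Matrix.one_apply, Matrix.sub_apply] using this
      · have := congrFun h (Sum.inr 1)
        simpa [Matrix.mulVec, dotProduct, Fintype.sum_sum_type, Fin.sum_univ_two,
          Matrix.one_apply, Matrix.sub_apply] using this
    · rintro ⟨h1, h2⟩
      ext i
      rcases i with i | i <;> fin_cases i <;>
        simp [Matrix.mulVec, dotProduct, Fintype.sum_sum_type, Fin.sum_univ_two,
          Matrix.one_apply, Matrix.sub_apply, h1, h2]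
  rw [hker]
  apply aux_rank
  rintro ⟨a, b⟩
  refine ⟨fun i => if i = Sum.inl 1 then a else if i = Sum.inr 0 then b else 0, ?_⟩
  simp

theorem stmt7 :
    (∀ ε : ℝ, ε ≠ 0 →
      -- (i)
      IsSymplectic (Seps ε) ∧
      -- (ii)
      spectrum ℂ ((Seps ε).map Complex.ofReal) =
        {1 + (ε : ℂ) * Complex.I, 1 - (ε : ℂ) * Complex.I,
          (1 + (ε : ℂ) * Complex.I)⁻¹, (1 - (ε : ℂ) * Complex.I)⁻¹} ∧
      ¬ IsElliptic (Seps ε) ∧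
      -- (iii)
      0 < (Seps ε - 1).det ∧ (Seps ε).trace < 4) ∧
    -- (iv)
    Filter.Tendsto Seps (nhdsWithin 0 {0}ᶜ) (nhds Pmat) ∧
    -- (v)
    IsSymplectic Pmat ∧ Pmat ≠ 1 ∧ spectrum ℂ (Pmat.map Complex.ofReal) = {1} ∧
    Module.finrank ℝ ↥(LinearMap.ker (Pmat - 1).mulVecLin) = 2 := by
  refine ⟨fun ε hε => ⟨?_, spec_Seps hε, not_elliptic hε, det_pos hε, trace_lt hε⟩,
    tendsto_Seps, Pmat_symp, Pmat_ne_one, Pmat_spec, Pmat_ker⟩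
  unfold IsSymplectic
  rw [Seps_eq hε]
  exact Sexp_symp hε
end

section
/- Let S be a real matrix of even size 2m × 2m such that every complex eigenvalue μ of S satisfies |μ| = 1 and μ ≠ 1. Then det(S − I) > 0. -/
open Matrix Polynomial Filter

lemma eval_charpoly_aux {n : Type*} [DecidableEq n] [Fintype n] {R : Type*} [CommRing R]
    (M : Matrix n n R) (t : R) : M.charpoly.eval t = (t • (1 : Matrix n n R) - M).det := by
  have h1 : M.charpoly.eval t = (Polynomial.evalRingHom t) M.charmatrix.det := rfl
  rw [h1, RingHom.map_det]
  congr 1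
  ext i j
  simp [charmatrix_apply, Matrix.diagonal_apply, Matrix.one_apply, Matrix.smul_apply,
    apply_ite (Polynomial.eval t)]

lemma root_mem_spectrum_aux {n : Type*} [DecidableEq n] [Fintype n]
    (S : Matrix n n ℝ) (r : ℝ) (hr : S.charpoly.eval r = 0) :
    (r : ℂ) ∈ spectrum ℂ (S.map Complex.ofReal) := by
  rw [spectrum.mem_iff]
  intro hu
  rw [Matrix.isUnit_iff_isUnit_det] at hu
  have hcp : (S.map Complex.ofReal).charpoly = S.charpoly.map Complex.ofRealHom :=
    Matrix.charpoly_map S Complex.ofRealHom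
  have hdet : (algebraMap ℂ (Matrix n n ℂ) r - S.map Complex.ofReal).det = 0 := by
    have h2 := eval_charpoly_aux (S.map Complex.ofReal) (r : ℂ)
    rw [hcp] at h2
    rw [Algebra.algebraMap_eq_smul_one, ← h2, Polynomial.eval_map]
    show Polynomial.eval₂ Complex.ofRealHom (Complex.ofRealHom r) S.charpoly = 0
    rw [Polynomial.eval₂_at_apply, hr, map_zero]
  rw [hdet] at hu
  exact hu.ne_zero rfl

theorem stmt10 (m : ℕ) (S : Matrix (Fin (2 * m)) (Fin (2 * m)) ℝ)
    (h : ∀ μ ∈ spectrum ℂ (S.map Complex.ofReal), ‖μ‖ = 1 ∧ μ ≠ 1) :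
    0 < (S - 1).det := by
  have hdet : (S - 1).det = S.charpoly.eval 1 := by
    rw [eval_charpoly_aux, one_smul,
      show (1 : Matrix (Fin (2 * m)) (Fin (2 * m)) ℝ) - S = -(S - 1) from (neg_sub S 1).symm,
      Matrix.det_neg]
    simp [Fintype.card_fin, pow_mul]
  rw [hdet]
  have hroot : ∀ r : ℝ, S.charpoly.eval r = 0 → |r| = 1 ∧ r ≠ 1 := by
    intro r hr
    obtain ⟨h1, h2⟩ := h (r : ℂ) (root_mem_spectrum_aux S r hr)
    refine ⟨by rw [Complex.norm_real, Real.norm_eq_abs] at h1; exact h1, fun hr1 => h2 (by rw [hr1]; norm_num)⟩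
  have hne : S.charpoly.eval 1 ≠ 0 := fun h0 => (hroot 1 h0).2 rfl
  rcases eq_or_ne m 0 with hm | hm
  · subst hm
    have hdeg : S.charpoly.natDegree = 0 := by
      rw [Matrix.charpoly_natDegree_eq_dim, Fintype.card_fin]
    have : S.charpoly = 1 := (Polynomial.Monic.natDegree_eq_zero S.charpoly_monic).mp hdeg
    simp [this]
  · by_contra hle
    push_neg at hle
    have hlt : S.charpoly.eval 1 < 0 := lt_of_le_of_ne hle hne
    have hdeg : 0 < S.charpoly.degree := by
      rw [← Polynomial.natDegree_pos_iff_degree_pos, Matrix.charpoly_natDegree_eq_dim,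
        Fintype.card_fin]
      omega
    have htend : Tendsto (fun x => S.charpoly.eval x) atTop atTop :=
      S.charpoly.tendsto_atTop_of_leadingCoeff_nonneg hdeg
        (by rw [S.charpoly_monic.leadingCoeff]; norm_num)
    obtain ⟨T, hT1, hTpos⟩ : ∃ T, 1 < T ∧ 0 < S.charpoly.eval T := by
      obtain ⟨T, hT⟩ := ((htend.eventually_gt_atTop 0).and (eventually_gt_atTop 1)).exists
      exact ⟨T, hT.2, hT.1⟩
    have hcont : ContinuousOn (fun x => S.charpoly.eval x) (Set.Icc 1 T) :=
      (S.charpoly.continuous).continuousOn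
    obtain ⟨r, hrmem, hr0⟩ : ∃ r ∈ Set.Ioo (1 : ℝ) T, S.charpoly.eval r = 0 :=
      intermediate_value_Ioo (le_of_lt hT1) hcont ⟨hlt, hTpos⟩
    have hgt : (1 : ℝ) < r := hrmem.1
    have habs := (hroot r hr0).1
    rw [abs_of_pos (lt_trans one_pos hgt)] at habs
    linarith
end

section
/- Let N be a nonzero integer and let Σ_N = {(x, y) ∈ (ℝ² \ {0}) × ℝ² : ½|y|² − 1/|x| = −½ N^{2/3} and N(x₁y₂ − x₂y₁) > 0}. Then Σ_N is a three-dimensional manifold diffeomorphic to S¹ × 𝔻, where 𝔻 is the open unit disk in ℝ²; in particular Σ_N is homeomorphic to S¹ × 𝔻. -/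
/-- The set Σ_N of initial conditions producing 2π-periodic Kepler orbits with
winding number N. -/
def SigmaN (N : ℤ) : Set (EuclideanSpace ℝ (Fin 2) × EuclideanSpace ℝ (Fin 2)) :=
  {p | p.1 ≠ 0 ∧
    (1 : ℝ) / 2 * ‖p.2‖ ^ 2 - 1 / ‖p.1‖ = -(1 : ℝ) / 2 * (|N| : ℝ) ^ ((2 : ℝ) / 3) ∧
    0 < (N : ℝ) * (p.1 0 * p.2 1 - p.1 1 * p.2 0)}

open Complex Metric Real

noncomputable section

namespace Stmt13

/-- Identify `EuclideanSpace ℝ (Fin 2)` with `ℂ`. -/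
def toC (x : EuclideanSpace ℝ (Fin 2)) : ℂ := ⟨x 0, x 1⟩

def ofC (z : ℂ) : EuclideanSpace ℝ (Fin 2) := WithLp.toLp 2 ![z.re, z.im]

@[simp] lemma toC_ofC (z : ℂ) : toC (ofC z) = z := rfl

@[simp] lemma ofC_toC (x : EuclideanSpace ℝ (Fin 2)) : ofC (toC x) = x := by
  ext i; fin_cases i <;> rfl

@[simp] lemma toC_re (x : EuclideanSpace ℝ (Fin 2)) : (toC x).re = x 0 := rfl
@[simp] lemma toC_im (x : EuclideanSpace ℝ (Fin 2)) : (toC x).im = x 1 := rfl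
@[simp] lemma ofC_zero_apply (z : ℂ) : ofC z 0 = z.re := rfl
@[simp] lemma ofC_one_apply (z : ℂ) : ofC z 1 = z.im := rfl

lemma norm_toC (x : EuclideanSpace ℝ (Fin 2)) : ‖toC x‖ = ‖x‖ := by
  rw [EuclideanSpace.norm_eq, Complex.norm_def,
    Complex.normSq_apply]
  simp [Fin.sum_univ_two, Real.norm_eq_abs, sq_abs, sq]

lemma norm_ofC (z : ℂ) : ‖ofC z‖ = ‖z‖ := by
  rw [← norm_toC, toC_ofC]

lemma toC_ne_zero {x : EuclideanSpace ℝ (Fin 2)} (hx : x ≠ 0) : toC x ≠ 0 := by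
  intro h
  apply hx
  have := congrArg ofC h
  rw [ofC_toC] at this
  rw [this]
  ext i; fin_cases i <;> simp [ofC]

lemma continuous_toC : Continuous toC := by
  have : toC = fun x => Complex.equivRealProdCLM.symm (x 0, x 1) := by
    funext x
    apply Complex.ext <;> simp [toC]
  rw [this]
  exact Complex.equivRealProdCLM.symm.continuous.comp
    ((PiLp.continuous_apply _ _ (0 : Fin 2)).prodMk (PiLp.continuous_apply _ _ (1 : Fin 2)))

lemma continuous_ofC : Continuous ofC := by
  have : Continuous fun z : ℂ => (ofC z : Fin 2 → ℝ) := by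
    apply continuous_pi
    intro i
    fin_cases i
    · exact Complex.continuous_re
    · exact Complex.continuous_im
  exact (PiLp.continuous_toLp 2 _).comp this

/-- Real coordinates of `conj z * w`. -/
lemma conj_mul_re (z w : ℂ) : ((starRingEnd ℂ) z * w).re = z.re * w.re + z.im * w.im := by
  simp [mul_comm]
lemma conj_mul_im (z w : ℂ) : ((starRingEnd ℂ) z * w).im = z.re * w.im - z.im * w.re := by
  simp [mul_comm]; ring

section Main

variable (N : ℤ)

def lam : ℝ := (|N| : ℝ) ^ ((2 : ℝ) / 3)

def eps : ℝ := if 0 < N then 1 else -1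

variable {N}

lemma lam_pos (hN : N ≠ 0) : 0 < lam N := by
  apply Real.rpow_pos_of_pos
  have : (0 : ℤ) < |N| := abs_pos.mpr hN
  exact_mod_cast this

lemma eps_sq : eps N ^ 2 = 1 := by
  unfold eps; split <;> norm_num

lemma eps_ne_zero : eps N ≠ 0 := by
  unfold eps; split <;> norm_num

lemma mul_eps_pos_iff (hN : N ≠ 0) (A : ℝ) : 0 < (N : ℝ) * A ↔ 0 < eps N * A := by
  unfold eps
  rcases lt_or_gt_of_ne hN with h | h
  · have h' : (N : ℝ) < 0 := by exact_mod_cast h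
    rw [if_neg (not_lt.mpr h.le), neg_one_mul, neg_pos, mul_pos_iff]
    constructor
    · rintro (⟨h1, _⟩ | ⟨_, h2⟩)
      · exact (lt_asymm h' h1).elim
      · exact h2
    · intro hA
      exact Or.inr ⟨h', hA⟩
  · have h' : (0 : ℝ) < N := by exact_mod_cast h
    rw [if_pos h, one_mul, mul_pos_iff]
    constructor
    · rintro (⟨_, h2⟩ | ⟨h1, _⟩)
      · exact h2
      · exact (lt_asymm h' h1).elim
    · intro hA
      exact Or.inl ⟨h', hA⟩


lemma cross_eq (x y : EuclideanSpace ℝ (Fin 2)) :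
    x 0 * y 1 - x 1 * y 0 = ((starRingEnd ℂ) (toC x) * toC y).im := by
  rw [conj_mul_im]; simp

lemma dot_eq (x y : EuclideanSpace ℝ (Fin 2)) :
    x 0 * y 0 + x 1 * y 1 = ((starRingEnd ℂ) (toC x) * toC y).re := by
  rw [conj_mul_re]; simp

lemma conj_mul_key (r : ℝ) (c : ℂ) (u : Circle) :
    (starRingEnd ℂ) ((r : ℂ) * u) * (c * (u : ℂ)) = (r : ℂ) * c := by
  have h : (starRingEnd ℂ) (u : ℂ) * u = 1 := by
    rw [mul_comm, Complex.mul_conj, Circle.normSq_coe, Complex.ofReal_one]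
  calc (starRingEnd ℂ) ((r : ℂ) * u) * (c * (u : ℂ))
      = (r : ℂ) * c * ((starRingEnd ℂ) (u : ℂ) * u) := by
        rw [map_mul, Complex.conj_ofReal]; ring
    _ = (r : ℂ) * c := by rw [h, mul_one]

lemma norm_coe_circle (u : Circle) : ‖(u : ℂ)‖ = 1 :=
  mem_sphere_zero_iff_norm.mp u.2

/-- The forward map. -/
def fwd (hN : N ≠ 0) (p : ↥(SigmaN N)) : Circle × ℝ × ℝ :=
  (⟨(‖p.1.1‖ : ℂ)⁻¹ * toC p.1.1, by
      have hx : p.1.1 ≠ 0 := p.2.1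
      have hn : ‖p.1.1‖ ≠ 0 := norm_ne_zero_iff.mpr hx
      show _ ∈ Metric.sphere (0 : ℂ) 1
      rw [mem_sphere_zero_iff_norm, norm_mul, norm_inv, Complex.norm_real,
        Real.norm_eq_abs, abs_norm, norm_toC]
      field_simp⟩,
   Real.log ‖p.1.2‖,
   (p.1.1 0 * p.1.2 0 + p.1.1 1 * p.1.2 1) /
     (eps N * (p.1.1 0 * p.1.2 1 - p.1.1 1 * p.1.2 0)))

/-- Membership facts. -/
lemma mem_spec (hN : N ≠ 0) {p : EuclideanSpace ℝ (Fin 2) × EuclideanSpace ℝ (Fin 2)}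
    (hp : p ∈ SigmaN N) :
    0 < ‖p.1‖ ∧ 0 < ‖p.2‖ ∧ ‖p.1‖ = 2 / (‖p.2‖ ^ 2 + lam N) ∧
      0 < eps N * (p.1 0 * p.2 1 - p.1 1 * p.2 0) := by
  obtain ⟨hx, hE, hA⟩ := hp
  have hlampos := lam_pos hN
  have hn : 0 < ‖p.1‖ := norm_pos_iff.mpr hx
  have hA' : 0 < eps N * (p.1 0 * p.2 1 - p.1 1 * p.2 0) := (mul_eps_pos_iff hN _).mp hA
  have hy : 0 < ‖p.2‖ := by
    rcases eq_or_ne p.2 0 with h | h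
    · exfalso
      rw [h] at hA'
      simp [show ((0 : EuclideanSpace ℝ (Fin 2)) 0 : ℝ) = 0 from rfl,
        show ((0 : EuclideanSpace ℝ (Fin 2)) 1 : ℝ) = 0 from rfl] at hA'
    · exact norm_pos_iff.mpr h
  refine ⟨hn, hy, ?_, hA'⟩
  have hlam : (-(1 : ℝ)) / 2 * (|N| : ℝ) ^ ((2 : ℝ) / 3) = -(1 : ℝ) / 2 * lam N := rfl
  rw [hlam] at hE
  rw [eq_div_iff (by positivity)]
  have h2 : 1 / ‖p.1‖ = (‖p.2‖ ^ 2 + lam N) / 2 := by linarith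
  field_simp at h2
  linarith

/-- The backward map: membership. -/
lemma bwd_mem (hN : N ≠ 0) (v : Circle × ℝ × ℝ) :
    (ofC (((((2 : ℝ) / (Real.exp v.2.1 ^ 2 + lam N) : ℝ)) : ℂ) * v.1),
      ofC ((((Real.exp v.2.1 / Real.sqrt (1 + v.2.2 ^ 2)) : ℝ) : ℂ) *
        ((v.2.2 : ℂ) + (eps N : ℂ) * Complex.I) * v.1)) ∈ SigmaN N := by
  obtain ⟨u, a, s⟩ := v
  simp only [SigmaN, Set.mem_setOf_eq]
  have hlampos : 0 < lam N := lam_pos hN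
  set ρ := Real.exp a with hρdef
  have hρ : 0 < ρ := Real.exp_pos a
  set q := Real.sqrt (1 + s ^ 2) with hqdef
  have hq : 0 < q := Real.sqrt_pos.mpr (by positivity)
  have hq2 : q ^ 2 = 1 + s ^ 2 := Real.sq_sqrt (by positivity)
  set r := (2 : ℝ) / (ρ ^ 2 + lam N) with hrdef
  have hr : 0 < r := by positivity
  have he : eps N * eps N = 1 := by have h := eps_sq (N := N); rwa [sq] at h
  have hz : ‖ofC ((r : ℂ) * u)‖ = r := by
    rw [norm_ofC, norm_mul, Complex.norm_real, norm_coe_circle, mul_one,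
      Real.norm_eq_abs, abs_of_pos hr]
  have hx0 : ofC ((r : ℂ) * u) ≠ 0 := by
    rw [← norm_ne_zero_iff, hz]; exact hr.ne'
  have h1 : ‖(s : ℂ) + (eps N : ℂ) * Complex.I‖ = q := by
    rw [Complex.norm_def, Complex.normSq_apply]
    simp only [Complex.add_re, Complex.ofReal_re, Complex.mul_re, Complex.I_re,
      Complex.I_im, Complex.ofReal_im, Complex.add_im, Complex.mul_im]
    rw [hqdef]
    ring_nf
    congr 1
    rw [eps_sq]
    ring
  have hw : ‖ofC (((ρ / q : ℝ) : ℂ) * ((s : ℂ) + (eps N : ℂ) * Complex.I) * u)‖ = ρ := by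
    rw [norm_ofC, norm_mul, norm_mul, Complex.norm_real, norm_coe_circle, mul_one,
      Real.norm_eq_abs, abs_of_pos (div_pos hρ hq), h1]
    field_simp
  refine ⟨hx0, ?_, ?_⟩
  · rw [hw, hz]
    have hlam : (-(1 : ℝ)) / 2 * (|N| : ℝ) ^ ((2 : ℝ) / 3) = -(1 : ℝ) / 2 * lam N := rfl
    rw [hlam, hrdef]
    field_simp
    ring
  · rw [cross_eq, toC_ofC, toC_ofC, conj_mul_key]
    have him : ((r : ℂ) * (((ρ / q : ℝ) : ℂ) * ((s : ℂ) + (eps N : ℂ) * Complex.I))).im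
        = r * (ρ / q) * eps N := by
      simp [Complex.mul_im, Complex.mul_re]
      ring
    rw [him, mul_eps_pos_iff hN]
    rw [show eps N * (r * (ρ / q) * eps N) = r * (ρ / q) * (eps N * eps N) by ring, he,
      mul_one]
    exact mul_pos hr (div_pos hρ hq)

/-- The backward map. -/
def bwd (hN : N ≠ 0) (v : Circle × ℝ × ℝ) : ↥(SigmaN N) :=
  ⟨(ofC (((((2 : ℝ) / (Real.exp v.2.1 ^ 2 + lam N) : ℝ)) : ℂ) * v.1),
      ofC ((((Real.exp v.2.1 / Real.sqrt (1 + v.2.2 ^ 2)) : ℝ) : ℂ) *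
        ((v.2.2 : ℂ) + (eps N : ℂ) * Complex.I) * v.1)), bwd_mem hN v⟩

lemma fwd_bwd (hN : N ≠ 0) (v : Circle × ℝ × ℝ) : fwd hN (bwd hN v) = v := by
  obtain ⟨u, a, s⟩ := v
  unfold fwd bwd
  dsimp only
  have hlampos : 0 < lam N := lam_pos hN
  set ρ := Real.exp a with hρdef
  have hρ : 0 < ρ := Real.exp_pos a
  set q := Real.sqrt (1 + s ^ 2) with hqdef
  have hq : 0 < q := Real.sqrt_pos.mpr (by positivity)
  set r := (2 : ℝ) / (ρ ^ 2 + lam N) with hrdef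
  have hr : 0 < r := by positivity
  have he : eps N * eps N = 1 := by have h := eps_sq (N := N); rwa [sq] at h
  have hz : ‖ofC ((r : ℂ) * u)‖ = r := by
    rw [norm_ofC, norm_mul, Complex.norm_real, norm_coe_circle, mul_one,
      Real.norm_eq_abs, abs_of_pos hr]
  have h1 : ‖(s : ℂ) + (eps N : ℂ) * Complex.I‖ = q := by
    rw [Complex.norm_def, Complex.normSq_apply]
    simp only [Complex.add_re, Complex.ofReal_re, Complex.mul_re, Complex.I_re,
      Complex.I_im, Complex.ofReal_im, Complex.add_im, Complex.mul_im]
    rw [hqdef]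
    ring_nf
    congr 1
    rw [eps_sq]
    ring
  have hw : ‖ofC (((ρ / q : ℝ) : ℂ) * ((s : ℂ) + (eps N : ℂ) * Complex.I) * u)‖ = ρ := by
    rw [norm_ofC, norm_mul, norm_mul, Complex.norm_real, norm_coe_circle, mul_one,
      Real.norm_eq_abs, abs_of_pos (div_pos hρ hq), h1]
    field_simp
  refine Prod.ext ?_ (Prod.ext ?_ ?_)
  · apply Subtype.ext
    show (‖ofC ((r : ℂ) * u)‖ : ℂ)⁻¹ * toC (ofC ((r : ℂ) * u)) = (u : ℂ)
    rw [toC_ofC, hz, ← mul_assoc, inv_mul_cancel₀ (Complex.ofReal_ne_zero.mpr hr.ne'),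
      one_mul]
  · show Real.log ‖ofC (((ρ / q : ℝ) : ℂ) * ((s : ℂ) + (eps N : ℂ) * Complex.I) * u)‖ = a
    rw [hw, hρdef]
    exact Real.log_exp a
  · show (ofC ((r : ℂ) * u) 0 * ofC (((ρ / q : ℝ) : ℂ) * ((s : ℂ) + (eps N : ℂ) * Complex.I) * u) 0 +
        ofC ((r : ℂ) * u) 1 * ofC (((ρ / q : ℝ) : ℂ) * ((s : ℂ) + (eps N : ℂ) * Complex.I) * u) 1) /
        (eps N * (ofC ((r : ℂ) * u) 0 * ofC (((ρ / q : ℝ) : ℂ) * ((s : ℂ) + (eps N : ℂ) * Complex.I) * u) 1 -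
          ofC ((r : ℂ) * u) 1 * ofC (((ρ / q : ℝ) : ℂ) * ((s : ℂ) + (eps N : ℂ) * Complex.I) * u) 0)) = s
    rw [dot_eq, cross_eq, toC_ofC, toC_ofC, conj_mul_key]
    have hre : ((r : ℂ) * (((ρ / q : ℝ) : ℂ) * ((s : ℂ) + (eps N : ℂ) * Complex.I))).re
        = r * (ρ / q) * s := by
      simp [Complex.mul_re, Complex.mul_im]
      ring
    have him : ((r : ℂ) * (((ρ / q : ℝ) : ℂ) * ((s : ℂ) + (eps N : ℂ) * Complex.I))).im
        = r * (ρ / q) * eps N := by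
      simp [Complex.mul_im, Complex.mul_re]
      ring
    rw [hre, him,
      show eps N * (r * (ρ / q) * eps N) = r * (ρ / q) * (eps N * eps N) by ring, he,
      mul_one, mul_comm (r * (ρ / q)) s, mul_div_assoc,
      div_self (mul_pos hr (div_pos hρ hq)).ne', mul_one]

lemma bwd_fwd (hN : N ≠ 0) (p : ↥(SigmaN N)) : bwd hN (fwd hN p) = p := by
  obtain ⟨⟨x, y⟩, hp⟩ := p
  have hms := mem_spec hN hp
  dsimp only at hms
  obtain ⟨hn, hρ, hxn, hA'⟩ := hms
  have hlampos : 0 < lam N := lam_pos hN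
  have he : eps N * eps N = 1 := by have h := eps_sq (N := N); rwa [sq] at h
  apply Subtype.ext
  unfold bwd fwd
  dsimp only
  set n := ‖x‖ with hndef
  set ρ := ‖y‖ with hρdef2
  set A := x 0 * y 1 - x 1 * y 0 with hAdef
  set D := x 0 * y 0 + x 1 * y 1 with hDdef
  set s := D / (eps N * A) with hsdef
  clear_value s
  clear_value D
  clear_value A
  clear_value ρ
  clear_value n
  have hexp : Real.exp (Real.log ρ) = ρ := Real.exp_log hρ
  have hne : ((n : ℝ) : ℂ) ≠ 0 := Complex.ofReal_ne_zero.mpr hn.ne'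
  have hD2 : D ^ 2 + A ^ 2 = n ^ 2 * ρ ^ 2 := by
    have h1 : ((starRingEnd ℂ) (toC x) * toC y).re = D := by
      rw [hDdef]; exact (dot_eq x y).symm
    have h2 : ((starRingEnd ℂ) (toC x) * toC y).im = A := by
      rw [hAdef]; exact (cross_eq x y).symm
    have h3 : Complex.normSq ((starRingEnd ℂ) (toC x) * toC y) = n ^ 2 * ρ ^ 2 := by
      rw [Complex.normSq_mul, Complex.normSq_conj, Complex.normSq_eq_norm_sq,
        Complex.normSq_eq_norm_sq,
        norm_toC, norm_toC, hndef, hρdef2]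
    rw [Complex.normSq_apply, h1, h2] at h3
    nlinarith [h3]
  have hq : Real.sqrt (1 + s ^ 2) = n * ρ / (eps N * A) := by
    have h4 : 1 + s ^ 2 = (n * ρ / (eps N * A)) ^ 2 := by
      rw [hsdef]
      have hE0 : eps N ≠ 0 := eps_ne_zero
      have hA0 : A ≠ 0 := right_ne_zero_of_mul hA'.ne'
      field_simp
      linear_combination hD2 + A ^ 2 * he
    rw [h4, Real.sqrt_sq (le_of_lt (div_pos (mul_pos hn hρ) hA'))]
  have hρq : ρ / Real.sqrt (1 + s ^ 2) = eps N * A / n := by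
    rw [hq]
    field_simp
  have hzc : toC x * (starRingEnd ℂ) (toC x) = ((n : ℝ) : ℂ) * ((n : ℝ) : ℂ) := by
    have hn2 : Complex.normSq (toC x) = n * n := by
      rw [hndef, Complex.normSq_eq_norm_sq, norm_toC]
      ring
    rw [Complex.mul_conj, hn2, Complex.ofReal_mul]
  have hDA : (starRingEnd ℂ) (toC x) * toC y = (D : ℂ) + (A : ℂ) * Complex.I := by
    apply Complex.ext
    · rw [conj_mul_re]
      simp [hDdef]
    · rw [conj_mul_im]
      simp [hAdef]
  refine Prod.ext ?_ ?_
  · show ofC ((((2 : ℝ) / (Real.exp (Real.log ρ) ^ 2 + lam N) : ℝ) : ℂ)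
        * ((n : ℂ)⁻¹ * toC x)) = x
    rw [hexp, show (2 : ℝ) / (ρ ^ 2 + lam N) = n from hxn.symm, ← mul_assoc,
      mul_inv_cancel₀ hne, one_mul, ofC_toC]
  · show ofC ((((Real.exp (Real.log ρ) / Real.sqrt (1 + s ^ 2) : ℝ)) : ℂ)
        * ((s : ℂ) + (eps N : ℂ) * Complex.I) * ((n : ℂ)⁻¹ * toC x)) = y
    rw [hexp, hρq]
    have hc : ((eps N * A / n : ℝ) : ℂ) * ((s : ℂ) + (eps N : ℂ) * Complex.I)
        = ((n : ℝ) : ℂ)⁻¹ * ((D : ℂ) + (A : ℂ) * Complex.I) := by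
      rw [← Complex.ofReal_inv]
      apply Complex.ext
      · simp only [Complex.mul_re, Complex.ofReal_re, Complex.ofReal_im, Complex.add_re,
          Complex.add_im, Complex.mul_im, Complex.I_re, Complex.I_im]
        rw [hsdef]
        have hE0 : eps N ≠ 0 := eps_ne_zero
        have hA0 : A ≠ 0 := right_ne_zero_of_mul hA'.ne'
        field_simp
        ring
      · simp only [Complex.mul_re, Complex.ofReal_re, Complex.ofReal_im, Complex.add_re,
          Complex.add_im, Complex.mul_im, Complex.I_re, Complex.I_im]
        field_simp
        linear_combination A * he
    have hgoal : ((eps N * A / n : ℝ) : ℂ) * ((s : ℂ) + (eps N : ℂ) * Complex.I)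
        * ((n : ℂ)⁻¹ * toC x) = toC y := by
      rw [hc, ← hDA]
      field_simp
      linear_combination toC y * hzc
    rw [hgoal, ofC_toC]

lemma continuous_fwd (hN : N ≠ 0) : Continuous (fwd hN) := by
  have hval : Continuous fun p : ↥(SigmaN N) =>
      (p : EuclideanSpace ℝ (Fin 2) × EuclideanSpace ℝ (Fin 2)) := continuous_subtype_val
  have hx : Continuous fun p : ↥(SigmaN N) => (p : EuclideanSpace ℝ (Fin 2) × EuclideanSpace ℝ (Fin 2)).1 := hval.fst
  have hy : Continuous fun p : ↥(SigmaN N) => (p : EuclideanSpace ℝ (Fin 2) × EuclideanSpace ℝ (Fin 2)).2 := hval.snd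
  have hxi : ∀ i, Continuous fun p : ↥(SigmaN N) => (p : EuclideanSpace ℝ (Fin 2) × EuclideanSpace ℝ (Fin 2)).1 i :=
    fun i => (PiLp.continuous_apply _ _ i).comp hx
  have hyi : ∀ i, Continuous fun p : ↥(SigmaN N) => (p : EuclideanSpace ℝ (Fin 2) × EuclideanSpace ℝ (Fin 2)).2 i :=
    fun i => (PiLp.continuous_apply _ _ i).comp hy
  unfold fwd
  refine Continuous.prodMk ?_ (Continuous.prodMk ?_ ?_)
  · apply Continuous.subtype_mk
    apply Continuous.mul
    · apply Continuous.inv₀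
      · exact Complex.continuous_ofReal.comp hx.norm
      · intro p
        exact Complex.ofReal_ne_zero.mpr (norm_ne_zero_iff.mpr p.2.1)
    · exact continuous_toC.comp hx
  · apply Real.continuousOn_log.comp_continuous hy.norm
    intro p
    simp only [Set.mem_compl_iff, Set.mem_singleton_iff]
    exact (mem_spec hN p.2).2.1.ne'
  · apply Continuous.div
    · exact ((hxi 0).mul (hyi 0)).add ((hxi 1).mul (hyi 1))
    · exact continuous_const.mul (((hxi 0).mul (hyi 1)).sub ((hxi 1).mul (hyi 0)))
    · intro p
      exact (mem_spec hN p.2).2.2.2.ne'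

lemma continuous_bwd (hN : N ≠ 0) : Continuous (bwd hN) := by
  have hlampos : 0 < lam N := lam_pos hN
  have hu : Continuous fun v : Circle × ℝ × ℝ => ((v.1 : ℂ)) :=
    continuous_subtype_val.comp continuous_fst
  have ha : Continuous fun v : Circle × ℝ × ℝ => v.2.1 := continuous_fst.comp continuous_snd
  have hs : Continuous fun v : Circle × ℝ × ℝ => v.2.2 := continuous_snd.comp continuous_snd
  apply Continuous.subtype_mk
  apply Continuous.prodMk
  · apply continuous_ofC.comp
    apply Continuous.mul
    · apply Complex.continuous_ofReal.comp
      apply Continuous.div continuous_const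
      · exact ((Real.continuous_exp.comp ha).pow 2).add continuous_const
      · intro v
        have : 0 < Real.exp v.2.1 ^ 2 + lam N := by positivity
        exact this.ne'
    · exact hu
  · apply continuous_ofC.comp
    apply Continuous.mul
    · apply Continuous.mul
      · apply Complex.continuous_ofReal.comp
        apply Continuous.div (Real.continuous_exp.comp ha)
        · exact Real.continuous_sqrt.comp (continuous_const.add (hs.pow 2))
        · intro v
          have h0 : (0 : ℝ) < 1 + v.2.2 ^ 2 := by positivity
          exact (Real.sqrt_pos.mpr h0).ne'
      · exact (Complex.continuous_ofReal.comp hs).add continuous_const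
    · exact hu

/-- The main homeomorphism. -/
def sigmaHomeo (hN : N ≠ 0) : ↥(SigmaN N) ≃ₜ Circle × ℝ × ℝ where
  toFun := fwd hN
  invFun := bwd hN
  left_inv := bwd_fwd hN
  right_inv := fwd_bwd hN
  continuous_toFun := continuous_fwd hN
  continuous_invFun := continuous_bwd hN

end Main

end Stmt13


theorem stmt13 (N : ℤ) (hN : N ≠ 0) :
    Nonempty
      (↥(SigmaN N) ≃ₜ (Circle × {q : EuclideanSpace ℝ (Fin 2) // ‖q‖ < 1})) := by
  have h1 := Stmt13.sigmaHomeo hN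
  have h2 : (ℝ × ℝ) ≃ₜ EuclideanSpace ℝ (Fin 2) :=
    (Homeomorph.piFinTwo fun _ => ℝ).symm.trans
      (EuclideanSpace.equiv (Fin 2) ℝ).symm.toHomeomorph
  have h3 : EuclideanSpace ℝ (Fin 2) ≃ₜ Metric.ball (0 : EuclideanSpace ℝ (Fin 2)) 1 :=
    Homeomorph.unitBall
  have hset : Metric.ball (0 : EuclideanSpace ℝ (Fin 2)) 1
      = {q : EuclideanSpace ℝ (Fin 2) | ‖q‖ < 1} := by
    ext q
    simp [mem_ball_zero_iff]
  have h4 : ↥(Metric.ball (0 : EuclideanSpace ℝ (Fin 2)) 1)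
      ≃ₜ {q : EuclideanSpace ℝ (Fin 2) // ‖q‖ < 1} := Homeomorph.setCongr hset
  exact ⟨h1.trans ((Homeomorph.refl Circle).prodCongr ((h2.trans h3).trans h4))⟩
end
end

section
/- For every e with 0 ≤ e < 1, the map u ↦ u − e sin u is a strictly increasing real-analytic bijection of ℝ onto ℝ. Consequently, for every (e, l) ∈ (−1, 1) × ℝ, Kepler's equation u − e sin u = l has a unique solution u = u(e, l), and the function (e, l) ↦ u(e, l) is real analytic on (−1, 1) × ℝ. -/
open Real Set Filter

lemma analyticAt_rsin (x : ℝ) : AnalyticAt ℝ Real.sin x := by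
  have h1 : AnalyticAt ℝ Complex.sin (x:ℂ) :=
    (Complex.differentiable_sin.analyticAt (x:ℂ)).restrictScalars
  have h2 : AnalyticAt ℝ (fun t : ℝ => (Complex.sin t).re) x :=
    (Complex.reCLM.analyticAt _).comp (h1.comp (Complex.ofRealCLM.analyticAt x))
  exact h2.congr (by filter_upwards with t; simp [← Complex.ofReal_sin])

lemma kepler_hasDerivAt (e v : ℝ) :
    HasDerivAt (fun u : ℝ => u - e * Real.sin u) (1 - e * Real.cos v) v :=
  (hasDerivAt_id v).sub (((Real.hasDerivAt_sin v).const_mul e).congr_deriv (by ring))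

lemma kepler_strictMono {e : ℝ} (he : |e| < 1) :
    StrictMono (fun u : ℝ => u - e * Real.sin u) := by
  apply strictMono_of_deriv_pos
  intro v
  rw [(kepler_hasDerivAt e v).deriv]
  have : |e * Real.cos v| < 1 := by
    calc |e * Real.cos v| = |e| * |Real.cos v| := abs_mul _ _
    _ ≤ |e| * 1 := by gcongr; exact Real.abs_cos_le_one v
    _ < 1 := by linarith
  have := (abs_lt.1 this).2
  linarith

lemma kepler_surjective {e : ℝ} (he : |e| < 1) :
    Function.Surjective (fun u : ℝ => u - e * Real.sin u) := by
  have hc : Continuous (fun u : ℝ => u - e * Real.sin u) := by continuity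
  have hb : ∀ v : ℝ, |e * Real.sin v| ≤ 1 := by
    intro v
    calc |e * Real.sin v| = |e| * |Real.sin v| := abs_mul _ _
    _ ≤ 1 * 1 := by
        apply mul_le_mul he.le (Real.abs_sin_le_one v) (abs_nonneg _) zero_le_one
    _ = 1 := one_mul 1
  apply hc.surjective
  · apply tendsto_atTop_mono (f := fun v : ℝ => v - 1)
    · intro v; have := (abs_le.1 (hb v)).2; show _ ≤ _; linarith
    · exact tendsto_atTop_add_const_right _ _ tendsto_id
  · apply tendsto_atBot_mono (f := fun v : ℝ => v + 1)
    · intro v; have := (abs_le.1 (hb v)).1; show _ ≤ _; linarith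
    · exact tendsto_atBot_add_const_right _ _ tendsto_id

lemma kepler_analytic (e : ℝ) :
    AnalyticOnNhd ℝ (fun u : ℝ => u - e * Real.sin u) Set.univ := by
  intro x _
  exact (analyticAt_id).sub ((analyticAt_const).mul (analyticAt_rsin x))

lemma abs_lt_one_of_Ioo {e : ℝ} (he : e ∈ Set.Ioo (-1:ℝ) 1) : |e| < 1 :=
  abs_lt.2 ⟨he.1, he.2⟩

noncomputable def usol (p : ℝ × ℝ) : ℝ :=
  if h : p.1 ∈ Set.Ioo (-1:ℝ) 1 then
    Classical.choose (kepler_surjective (abs_lt_one_of_Ioo h) p.2)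
  else 0

lemma usol_spec {p : ℝ × ℝ} (h : p.1 ∈ Set.Ioo (-1:ℝ) 1) :
    usol p - p.1 * Real.sin (usol p) = p.2 := by
  rw [usol, dif_pos h]
  exact Classical.choose_spec (kepler_surjective (abs_lt_one_of_Ioo h) p.2)

lemma usol_unique {p : ℝ × ℝ} (h : p.1 ∈ Set.Ioo (-1:ℝ) 1) {w : ℝ}
    (hw : w - p.1 * Real.sin w = p.2) : w = usol p :=
  (kepler_strictMono (abs_lt_one_of_Ioo h)).injective (by
    show w - p.1 * Real.sin w = usol p - p.1 * Real.sin (usol p)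
    rw [hw, usol_spec h])

/-- The full map `F (e, v) = (e, v - e sin v)`. -/
noncomputable def Fmap (p : ℝ × ℝ) : ℝ × ℝ := (p.1, p.2 - p.1 * Real.sin p.2)

lemma Fmap_analyticAt (p : ℝ × ℝ) : AnalyticAt ℝ Fmap p := by
  apply AnalyticAt.prod
  · exact analyticAt_fst
  · exact analyticAt_snd.sub
      (analyticAt_fst.mul ((analyticAt_rsin p.2).comp analyticAt_snd))

/-- The derivative of `Fmap` as a continuous linear map, at a point where
`sin v = s` and `1 - e cos v = c`. -/
noncomputable def Lmap (s c : ℝ) : (ℝ × ℝ) →L[ℝ] (ℝ × ℝ) :=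
  (ContinuousLinearMap.fst ℝ ℝ ℝ).prod
    (c • ContinuousLinearMap.snd ℝ ℝ ℝ - s • ContinuousLinearMap.fst ℝ ℝ ℝ)

lemma Fmap_hasFDerivAt (e v : ℝ) :
    HasFDerivAt Fmap (Lmap (Real.sin v) (1 - e * Real.cos v)) (e, v) := by
  have h1 : HasFDerivAt (fun p : ℝ × ℝ => p.1) (ContinuousLinearMap.fst ℝ ℝ ℝ) (e, v) :=
    hasFDerivAt_fst
  have hsin : HasFDerivAt (fun p : ℝ × ℝ => Real.sin p.2)
      (Real.cos v • ContinuousLinearMap.snd ℝ ℝ ℝ) (e, v) := by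
    have := (Real.hasDerivAt_sin v).comp_hasFDerivAt (e, v)
      (hasFDerivAt_snd (𝕜 := ℝ) (E := ℝ) (F := ℝ))
    exact this
  have h2 : HasFDerivAt (fun p : ℝ × ℝ => p.2 - p.1 * Real.sin p.2)
      ((1 - e * Real.cos v) • ContinuousLinearMap.snd ℝ ℝ ℝ -
        Real.sin v • ContinuousLinearMap.fst ℝ ℝ ℝ) (e, v) := by
    have := (hasFDerivAt_snd (𝕜 := ℝ) (E := ℝ) (F := ℝ)).sub (h1.mul' hsin)
    refine this.congr_fderiv ?_
    ext
    · simp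
    · simp
  exact h1.prodMk h2

/-- `Lmap s c` as a continuous linear equiv when `c ≠ 0`. -/
noncomputable def Lequiv (s c : ℝ) (hc : c ≠ 0) : (ℝ × ℝ) ≃L[ℝ] (ℝ × ℝ) :=
  ContinuousLinearEquiv.equivOfInverse (Lmap s c)
    ((ContinuousLinearMap.fst ℝ ℝ ℝ).prod
      (c⁻¹ • (ContinuousLinearMap.snd ℝ ℝ ℝ + s • ContinuousLinearMap.fst ℝ ℝ ℝ)))
    (fun p => by
      simp [Lmap, ContinuousLinearMap.prod_apply]
      field_simp
      ext <;> simp [hc])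
    (fun p => by
      simp [Lmap, ContinuousLinearMap.prod_apply]
      field_simp
      ext <;> simp [hc])

lemma kepler_c_ne {e : ℝ} (he : |e| < 1) (v : ℝ) : (1 - e * Real.cos v) ≠ 0 := by
  have : |e * Real.cos v| < 1 := by
    calc |e * Real.cos v| = |e| * |Real.cos v| := abs_mul _ _
    _ ≤ |e| * 1 := by gcongr; exact Real.abs_cos_le_one v
    _ < 1 := by linarith
  have := (abs_lt.1 this).2
  intro h; linarith [h]

lemma usol_analyticAt {e l : ℝ} (he : e ∈ Set.Ioo (-1:ℝ) 1) :
    AnalyticAt ℝ usol (e, l) := by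
  set v := usol (e, l) with hv
  have hsol : v - e * Real.sin v = l := usol_spec he
  have hane : |e| < 1 := abs_lt_one_of_Ioo he
  have hc : (1 - e * Real.cos v) ≠ 0 := kepler_c_ne hane v
  set i := Lequiv (Real.sin v) (1 - e * Real.cos v) hc with hi
  have hderiv : HasFDerivAt Fmap (i : (ℝ × ℝ) →L[ℝ] (ℝ × ℝ)) (e, v) :=
    Fmap_hasFDerivAt e v
  have hstrict : HasStrictFDerivAt Fmap (i : (ℝ × ℝ) →L[ℝ] (ℝ × ℝ)) (e, v) := by
    have hcd : ContDiffAt ℝ 1 Fmap (e, v) := (Fmap_analyticAt (e, v)).contDiffAt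
    have := hcd.hasStrictFDerivAt one_ne_zero
    rwa [hderiv.fderiv] at this
  set PH := hstrict.toOpenPartialHomeomorph Fmap with hPH
  have hcoe : (PH : ℝ × ℝ → ℝ × ℝ) = Fmap := hstrict.toOpenPartialHomeomorph_coe
  have hmem : (e, v) ∈ PH.source := hstrict.mem_toOpenPartialHomeomorph_source
  obtain ⟨p, hp⟩ := Fmap_analyticAt (e, v)
  have hp1 : p 1 = (continuousMultilinearCurryFin1 ℝ (ℝ × ℝ) (ℝ × ℝ)).symm
      (i : (ℝ × ℝ) →L[ℝ] (ℝ × ℝ)) := by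
    have h1 : continuousMultilinearCurryFin1 ℝ (ℝ × ℝ) (ℝ × ℝ) (p 1) =
        (i : (ℝ × ℝ) →L[ℝ] (ℝ × ℝ)) := by
      have := hp.hasFDerivAt.unique hderiv
      simpa using this
    rw [← h1]; simp
  have hsymm : HasFPowerSeriesAt PH.symm (p.leftInv i (e, v)) (Fmap (e, v)) :=
    PH.hasFPowerSeriesAt_symm hmem (by rwa [hcoe]) hp1
  have hFev : Fmap (e, v) = (e, l) := by simp [Fmap, hsol]
  have hA : AnalyticAt ℝ (fun q : ℝ × ℝ => (PH.symm q).2) (e, l) := by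
    have := hsymm.analyticAt
    rw [hFev] at this
    exact analyticAt_snd.comp this
  apply hA.congr
  -- usol = snd ∘ PH.symm eventually near (e, l)
  have hopen : PH.target ∈ nhds (e, l) := by
    rw [← hFev]
    exact PH.open_target.mem_nhds (PH.map_source hmem)
  have hIoo : {q : ℝ × ℝ | q.1 ∈ Set.Ioo (-1:ℝ) 1} ∈ nhds (e, l) := by
    apply (isOpen_Ioo.preimage continuous_fst).mem_nhds
    exact he
  filter_upwards [hopen, hIoo] with q hq hq1
  have h1 : Fmap (PH.symm q) = q := by
    rw [← hcoe]; exact PH.right_inv hq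
  have h2 : (PH.symm q).1 = q.1 := by simpa [Fmap] using congrArg Prod.fst h1
  have h3 : (PH.symm q).2 - q.1 * Real.sin (PH.symm q).2 = q.2 := by
    have := congrArg Prod.snd h1
    simpa [Fmap, h2] using this
  exact usol_unique hq1 h3

theorem stmt15 :
    (∀ e : ℝ, 0 ≤ e → e < 1 →
      StrictMono (fun u : ℝ => u - e * Real.sin u) ∧
      Function.Bijective (fun u : ℝ => u - e * Real.sin u) ∧
      AnalyticOnNhd ℝ (fun u : ℝ => u - e * Real.sin u) Set.univ) ∧
    ∃ u : ℝ × ℝ → ℝ,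
      (∀ p : ℝ × ℝ, p.1 ∈ Set.Ioo (-1 : ℝ) 1 →
        u p - p.1 * Real.sin (u p) = p.2 ∧
        ∀ w : ℝ, w - p.1 * Real.sin w = p.2 → w = u p) ∧
      AnalyticOnNhd ℝ u (Set.Ioo (-1 : ℝ) 1 ×ˢ (Set.univ : Set ℝ)) := by
  constructor
  · intro e he0 he1
    have he : |e| < 1 := by rw [abs_of_nonneg he0]; exact he1
    exact ⟨kepler_strictMono he,
      ⟨(kepler_strictMono he).injective, kepler_surjective he⟩,
      kepler_analytic e⟩
  · refine ⟨usol, fun p hp => ⟨usol_spec hp, fun w hw => usol_unique hp hw⟩, ?_⟩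
    rintro ⟨e, l⟩ ⟨he, -⟩
    exact usol_analyticAt he
end

section
/- Fix Λ > 0 and λ, h ∈ ℝ. Define, for r in a neighborhood of 0, e(Λ, r) = r √(1/Λ − r²/(4Λ²)), let u = u(e(Λ, r), λ + h) be the solution of Kepler's equation u − e sin u = λ + h, and set x̃(λ, Λ, r, h) = Λ² R[−h] (cos u − e, √(1 − e²) sin u)ᵀ, where R[g] denotes the rotation matrix [[cos g, −sin g], [sin g, cos g]]. Then the first derivative of x̃ with respect to r at r = 0 is (∂x̃/∂r)(λ, Λ, 0, h) = ½ Λ^{3/2} R[−h] (−3 + cos 2(λ + h), sin 2(λ + h))ᵀ. -/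
open Real

/-- The eccentricity in Poincaré-type radial coordinates:
e(Λ, r) = r √(1/Λ − r²/(4Λ²)). -/
noncomputable def ecc (Λ r : ℝ) : ℝ := r * Real.sqrt (1 / Λ - r ^ 2 / (4 * Λ ^ 2))

theorem stmt17 (u : ℝ × ℝ → ℝ)
    (hu : AnalyticOnNhd ℝ u (Set.Ioo (-1 : ℝ) 1 ×ˢ (Set.univ : Set ℝ)))
    (hk : ∀ p : ℝ × ℝ, p.1 ∈ Set.Ioo (-1 : ℝ) 1 →
      u p - p.1 * Real.sin (u p) = p.2)
    (Λ lam h : ℝ) (hΛ : 0 < Λ) :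
    HasDerivAt
      (fun r : ℝ =>
        ((Λ ^ 2 * (Real.cos h * (Real.cos (u (ecc Λ r, lam + h)) - ecc Λ r) +
            Real.sin h * (Real.sqrt (1 - ecc Λ r ^ 2) * Real.sin (u (ecc Λ r, lam + h)))),
          Λ ^ 2 * (-Real.sin h * (Real.cos (u (ecc Λ r, lam + h)) - ecc Λ r) +
            Real.cos h * (Real.sqrt (1 - ecc Λ r ^ 2) * Real.sin (u (ecc Λ r, lam + h))))) :
          ℝ × ℝ))
      ((1 / 2 * Λ ^ ((3 : ℝ) / 2) * (Real.cos h * (-3 + Real.cos (2 * (lam + h))) +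
          Real.sin h * Real.sin (2 * (lam + h))),
        1 / 2 * Λ ^ ((3 : ℝ) / 2) * (-Real.sin h * (-3 + Real.cos (2 * (lam + h))) +
          Real.cos h * Real.sin (2 * (lam + h)))))
      0 := by
  set θ := lam + h with hθ
  set s := Real.sqrt (1 / Λ) with hs
  have hΛ0 : Λ ≠ 0 := hΛ.ne'
  -- ecc Λ 0 = 0
  have hE0 : ecc Λ 0 = 0 := by simp [ecc]
  -- derivative of ecc at 0
  have hg : HasDerivAt (fun r : ℝ => 1 / Λ - r ^ 2 / (4 * Λ ^ 2))
      (0 - 2 * (0:ℝ) ^ 1 / (4 * Λ ^ 2)) 0 := by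
    have h1 : HasDerivAt (fun r : ℝ => r ^ 2) (2 * (0:ℝ) ^ 1) 0 := by
      simpa using (hasDerivAt_pow 2 (0:ℝ))
    exact (hasDerivAt_const 0 (1/Λ)).sub (h1.div_const (4 * Λ ^ 2))
  have hg0 : (1:ℝ) / Λ - (0:ℝ) ^ 2 / (4 * Λ ^ 2) = 1 / Λ := by ring
  have hsq : HasDerivAt (fun r : ℝ => Real.sqrt (1 / Λ - r ^ 2 / (4 * Λ ^ 2)))
      ((0 - 2 * (0:ℝ) ^ 1 / (4 * Λ ^ 2)) / (2 * Real.sqrt (1 / Λ - (0:ℝ) ^ 2 / (4 * Λ ^ 2)))) 0 := by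
    apply hg.sqrt
    rw [hg0]
    positivity
  have hE : HasDerivAt (ecc Λ) s 0 := by
    have := (hasDerivAt_id (0:ℝ)).mul hsq
    simp only [hg0] at this
    refine this.congr_deriv ?_
    simp [hs]
  -- membership of (0, θ)
  have mem0 : ((0:ℝ), θ) ∈ Set.Ioo (-1:ℝ) 1 ×ˢ (Set.univ : Set ℝ) := by
    constructor <;> simp
  -- φ and its derivative
  set φ : ℝ → ℝ := fun r => u (ecc Λ r, θ) with hφdef
  have hcurve : HasDerivAt (fun r : ℝ => (ecc Λ r, θ)) ((s, 0) : ℝ × ℝ) 0 :=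
    hE.prodMk (hasDerivAt_const 0 θ)
  have hudiff : HasFDerivAt u (fderiv ℝ u (0, θ)) ((fun r : ℝ => (ecc Λ r, θ)) 0) := by
    rw [show (fun r : ℝ => (ecc Λ r, θ)) 0 = ((0:ℝ), θ) by simp [hE0]]
    exact ((hu _ mem0).differentiableAt).hasFDerivAt
  set c : ℝ := fderiv ℝ u (0, θ) (s, 0) with hc
  have hφ : HasDerivAt φ c 0 := hudiff.comp_hasDerivAt 0 hcurve
  -- φ 0 = θ
  have hφ0 : φ 0 = θ := by
    have := hk ((0:ℝ), θ) (by simp)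
    simp only [hφdef, hE0]
    simpa using this
  -- identity near 0
  have hmem : ∀ᶠ r in nhds (0:ℝ), ecc Λ r ∈ Set.Ioo (-1:ℝ) 1 := by
    have : ContinuousAt (ecc Λ) 0 := hE.continuousAt
    apply this.eventually_mem
    rw [hE0]
    exact isOpen_Ioo.mem_nhds (by norm_num)
  have heq : (fun r => φ r - ecc Λ r * Real.sin (φ r)) =ᶠ[nhds (0:ℝ)] fun _ => θ := by
    filter_upwards [hmem] with r hr
    exact hk (ecc Λ r, θ) hr
  have hF : HasDerivAt (fun r => φ r - ecc Λ r * Real.sin (φ r))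
      (c - (s * Real.sin (φ 0) + ecc Λ 0 * (Real.cos (φ 0) * c))) 0 :=
    hφ.sub (hE.mul hφ.sin)
  have hconst : HasDerivAt (fun _ : ℝ => θ)
      (c - (s * Real.sin (φ 0) + ecc Λ 0 * (Real.cos (φ 0) * c))) 0 :=
    hF.congr_of_eventuallyEq heq.symm
  have hcval : c = s * Real.sin θ := by
    have h0 := (hasDerivAt_const (0:ℝ) θ).unique hconst
    rw [hφ0, hE0] at h0
    -- 0 = c - (s * sin θ + 0)
    nlinarith [h0]
  -- derivative of sqrt (1 - ecc ^2)
  have hq : HasDerivAt (fun r => 1 - ecc Λ r ^ 2) (0 : ℝ) 0 := by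
    have h2 : HasDerivAt (fun r => ecc Λ r ^ 2) (2 * ecc Λ 0 ^ 1 * s) 0 := hE.pow 2
    have := (hasDerivAt_const (0:ℝ) (1:ℝ)).sub h2
    simp [hE0] at this
    exact this
  have hQ : HasDerivAt (fun r => Real.sqrt (1 - ecc Λ r ^ 2)) (0 : ℝ) 0 := by
    have := hq.sqrt (by simp [hE0])
    simpa using this
  -- assemble components
  have hA : HasDerivAt (fun r => Real.cos (φ r) - ecc Λ r)
      (-Real.sin θ * (s * Real.sin θ) - s) 0 := by
    have := (hφ.cos).sub hE
    rwa [hφ0, hcval] at this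
  have hB : HasDerivAt (fun r => Real.sqrt (1 - ecc Λ r ^ 2) * Real.sin (φ r))
      (Real.cos θ * (s * Real.sin θ)) 0 := by
    have := hQ.mul hφ.sin
    rw [hφ0, hcval] at this
    refine this.congr_deriv ?_
    simp [hE0]
  have h1 : HasDerivAt (fun r =>
      Λ ^ 2 * (Real.cos h * (Real.cos (φ r) - ecc Λ r) +
        Real.sin h * (Real.sqrt (1 - ecc Λ r ^ 2) * Real.sin (φ r))))
      (Λ ^ 2 * (Real.cos h * (-Real.sin θ * (s * Real.sin θ) - s) +
        Real.sin h * (Real.cos θ * (s * Real.sin θ)))) 0 :=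
    (((hA.const_mul (Real.cos h)).add (hB.const_mul (Real.sin h))).const_mul (Λ ^ 2))
  have h2 : HasDerivAt (fun r =>
      Λ ^ 2 * (-Real.sin h * (Real.cos (φ r) - ecc Λ r) +
        Real.cos h * (Real.sqrt (1 - ecc Λ r ^ 2) * Real.sin (φ r))))
      (Λ ^ 2 * (-Real.sin h * (-Real.sin θ * (s * Real.sin θ) - s) +
        Real.cos h * (Real.cos θ * (s * Real.sin θ)))) 0 :=
    (((hA.const_mul (-Real.sin h)).add (hB.const_mul (Real.cos h))).const_mul (Λ ^ 2))
  have key : Λ ^ 2 * s = Λ ^ ((3:ℝ)/2) := by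
    have hsΛ : Real.sqrt Λ ≠ 0 := by positivity
    have h1 : s = 1 / Real.sqrt Λ := by
      rw [hs, one_div, Real.sqrt_inv, one_div]
    have h2 : Λ ^ ((3:ℝ)/2) = Real.sqrt Λ ^ 3 := by
      rw [Real.sqrt_eq_rpow, ← Real.rpow_natCast (Λ ^ ((1:ℝ)/2)) 3,
        ← Real.rpow_mul hΛ.le]
      norm_num
    have h3 : Λ ^ 2 = Real.sqrt Λ ^ 4 := by
      have := Real.sq_sqrt hΛ.le
      nlinarith [this]
    rw [h1, h2, h3]
    field_simp
  have trig1 : -3 + Real.cos (2 * θ) = -2 - 2 * Real.sin θ ^ 2 := by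
    rw [Real.cos_two_mul']
    nlinarith [Real.sin_sq_add_cos_sq θ]
  have trig2 : Real.sin (2 * θ) = 2 * Real.sin θ * Real.cos θ := Real.sin_two_mul θ
  convert h1.prodMk h2 using 2
  · rw [trig1, trig2, ← key]; ring
  · rw [trig1, trig2, ← key]; ring
end
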